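/- arXiv:2509.05262 — 2 statements merged into one kernel-verified Lean document; each statement's English description precedes it below -/
import Mathlib

section
/- Conservation of mass and first moment for the limit solution: Let K be a kernel satisfying the global existence assumption with parameters μ, ν, λ = max(μ,ν) > 1, α ≥ 0, φ ∈ Y⁺_{-2α,2λ}, let c₀ ∈ Y⁺_{-α,λ}, and for each integer n ≥ 2 let c^n be the unique nonnegative solution of the truncated system with initial datum c₀·1_{(1/n,n)}, extended by zero. Suppose c : [0,∞) → Y⁺_{-α,λ} is a weak solution of CGEDG with initial datum c₀ obtained as a limit of a subsequence (c^{n_k}) in the sense that for each t ≥ 0, c^{n_k}_t → c_t weakly in L¹((0,m)) for every m > 0, and sup_{k} sup_{t∈[0,T]} M_{-α,λ}(c^{n_k}_t) < ∞ for every T < ∞. Then for all t ≥ 0, M₀(c_t) = M₀(c₀) and M₁(c_t) = M₁(c₀). -/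
open MeasureTheory Set Filter
open scoped ENNReal Topology

noncomputable section

/-- `x̂ := min 1 x` -/
def hatm (x : ℝ) : ℝ := min 1 x

/-- `x̌ := max 1 x` -/
def checkm (x : ℝ) : ℝ := max 1 x

/-- discrete Laplacian `(Δ_z f)(x) = f(x+z) - 2 f(x) + f(x-z)` -/
def dLap (f : ℝ → ℝ) (z x : ℝ) : ℝ := f (x + z) - 2 * f x + f (x - z)

/-- bounded measurable test function -/
def BddMeas (f : ℝ → ℝ) : Prop := Measurable f ∧ ∃ M : ℝ, ∀ x, |f x| ≤ M

/-- the weighted L¹ norm `‖c‖_{-β,r} = ∫₀^∞ (x^{-β} + x^r) |c x| dx` -/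
def Ynorm (β r : ℝ) (c : ℝ → ℝ) : ℝ :=
  ∫ x in Ioi (0:ℝ), (x ^ (-β) + x ^ r) * |c x|

/-- membership in the weighted space `Y_{-β,r}` -/
def MemY (β r : ℝ) (c : ℝ → ℝ) : Prop :=
  Measurable c ∧ IntegrableOn (fun x => (x ^ (-β) + x ^ r) * |c x|) (Ioi (0:ℝ))

/-- membership in the positive cone `Y⁺_{-β,r}` -/
def MemYplus (β r : ℝ) (c : ℝ → ℝ) : Prop :=
  MemY β r c ∧ ∀ᵐ x ∂(volume.restrict (Ioi (0:ℝ))), 0 ≤ c x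

/-- the moment `M_l(c) = ∫₀^∞ x^l c x dx` -/
def Mom (l : ℝ) (c : ℝ → ℝ) : ℝ := ∫ x in Ioi (0:ℝ), x ^ l * c x

/-- finiteness of the `l`-th moment -/
def MomFin (l : ℝ) (c : ℝ → ℝ) : Prop :=
  IntegrableOn (fun x => x ^ l * c x) (Ioi (0:ℝ))

/-- the mixed moment `M_{-α,λ}(c) = ∫₀^∞ x̂^{-α} x̌^λ c x dx` -/
def MomMix (a lam : ℝ) (c : ℝ → ℝ) : ℝ :=
  ∫ x in Ioi (0:ℝ), hatm x ^ (-a) * checkm x ^ lam * c x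

/-- `‖φ‖₀ = ∫₀^∞ φ` -/
def phiNorm0 (φ : ℝ → ℝ) : ℝ := ∫ z in Ioi (0:ℝ), φ z

/-- `‖φ‖_{0,r} = ∫₀^∞ (1 + z^r) φ(z) dz` -/
def phiNorm (r : ℝ) (φ : ℝ → ℝ) : ℝ := ∫ z in Ioi (0:ℝ), (1 + z ^ r) * φ z

/-- a kernel: measurable, nonnegative, symmetric in the first two arguments,
vanishing for `z > x` -/
structure IsKernel (K : ℝ → ℝ → ℝ → ℝ) : Prop where
  meas : Measurable (fun p : ℝ × ℝ × ℝ => K p.1 p.2.1 p.2.2)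
  nonneg : ∀ x y z, 0 ≤ K x y z
  symm : ∀ x y z, K x y z = K y x z
  vanish : ∀ x y z, x < z → K x y z = 0

/-- the domain `D = {(x,y,z) ∈ [0,∞)³ : x ≥ z, y ≥ z}` -/
def Dcgedg : Set (ℝ × ℝ × ℝ) :=
  {p | 0 ≤ p.1 ∧ 0 ≤ p.2.1 ∧ 0 ≤ p.2.2 ∧ p.2.2 ≤ p.1 ∧ p.2.2 ≤ p.2.1}

/-- weak solution of CGEDG with kernel `K`, initial datum `c₀` on `[0,T)`,
taking values in `Y⁺_{-β,r}`.  Coordinates: `p = (s, x, y, z)`. -/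
structure IsWeakSolution (K : ℝ → ℝ → ℝ → ℝ) (β r : ℝ) (T : ℝ≥0∞)
    (c₀ : ℝ → ℝ) (c : ℝ → ℝ → ℝ) : Prop where
  mem : ∀ t : ℝ, 0 ≤ t → ENNReal.ofReal t < T → MemYplus β r (c t)
  cont : ∀ f : ℝ → ℝ, BddMeas f →
    ContinuousOn (fun t => ∫ x in Ioi (0:ℝ), f x * c t x)
      {t : ℝ | 0 ≤ t ∧ ENNReal.ofReal t < T}
  bdd : ∃ C : ℝ, ∀ t : ℝ, 0 ≤ t → ENNReal.ofReal t < T → Ynorm β r (c t) ≤ C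
  integ : ∀ t : ℝ, 0 ≤ t → ENNReal.ofReal t < T →
    IntegrableOn (fun p : ℝ × ℝ × ℝ × ℝ =>
        K p.2.1 p.2.2.1 p.2.2.2 * c p.1 p.2.1 * c p.1 p.2.2.1)
      ((Ioc (0:ℝ) t) ×ˢ Dcgedg)
  weak : ∀ t : ℝ, 0 ≤ t → ENNReal.ofReal t < T → ∀ f : ℝ → ℝ, BddMeas f →
    (∫ x in Ioi (0:ℝ), f x * (c t x - c₀ x)) =
      ∫ p in (Ioc (0:ℝ) t) ×ˢ Dcgedg,
        dLap f p.2.2.2 p.2.1 *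
          (K p.2.1 p.2.2.1 p.2.2.2 * c p.1 p.2.1 * c p.1 p.2.2.1)

/-- the bound on the second derivative of the kernel in its first argument:
`∂₁² K(x,y,z) ≤ ŷ^{-α} y̌^λ φ(z)` for `x ≥ 0` (together with twice
differentiability in the first argument). -/
def SecondDerivBound (K : ℝ → ℝ → ℝ → ℝ) (a lam : ℝ) (φ : ℝ → ℝ) : Prop :=
  ∀ y z, 0 ≤ y → 0 ≤ z → ∀ x, 0 ≤ x →
    DifferentiableWithinAt ℝ (fun w => K w y z) (Ici 0) x ∧
    DifferentiableWithinAt ℝ (derivWithin (fun w => K w y z) (Ici 0)) (Ici 0) x ∧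
    derivWithin (derivWithin (fun w => K w y z) (Ici 0)) (Ici 0) x ≤
      hatm y ^ (-a) * checkm y ^ lam * φ z

/-- the singular bound `(min(1,x-z))^{-α} K(x,y,z) ≤ Cα x̂^{-2α} ŷ^{-α} x̌^λ y̌^λ φ(z)`
for `x ≥ z ≥ 0`. -/
def SingularBound (K : ℝ → ℝ → ℝ → ℝ) (a lam Ca : ℝ) (φ : ℝ → ℝ) : Prop :=
  ∀ x y z, 0 ≤ y → 0 ≤ z → z ≤ x →
    (min 1 (x - z)) ^ (-a) * K x y z ≤
      Ca * hatm x ^ (-(2*a)) * hatm y ^ (-a) * checkm x ^ lam * checkm y ^ lam * φ z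

/-- the global existence assumption (Assumption 1.3) with parameters `μ, ν, α` and
weight `φ`; here `λ = max μ ν`. -/
structure GlobalExistenceAssumption (K : ℝ → ℝ → ℝ → ℝ) (μ ν a : ℝ) (φ : ℝ → ℝ) :
    Prop where
  hμ : μ ∈ Icc (0:ℝ) 2
  hν : ν ∈ Icc (0:ℝ) 2
  hμν : μ + ν ≤ 3
  hlam : 1 < max μ ν
  ha : 0 ≤ a
  hφ : MemYplus (2*a) (2 * max μ ν) φ
  growth : ∀ x y z, 0 ≤ x → 0 ≤ y → 0 ≤ z →
    K x y z ≤ hatm x ^ (-a) * hatm y ^ (-a) *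
      ((checkm x ^ μ * checkm y ^ ν + checkm x ^ ν * checkm y ^ μ) / 2) * φ z
  deriv2 : SecondDerivBound K a (max μ ν) φ
  sing : 0 < a → ∃ Ca > 0, SingularBound K a (max μ ν) Ca φ

/-- the gelation time of a solution on `[0,T)`:
`T_gel = sup { t ∈ [0,T) : M₂(c_t) < ∞ }` (as an extended real). -/
def gelTime (T : ℝ≥0∞) (c : ℝ → ℝ → ℝ) : ℝ≥0∞ :=
  sSup {s : ℝ≥0∞ | ∃ t : ℝ, s = ENNReal.ofReal t ∧ 0 ≤ t ∧
    ENNReal.ofReal t < T ∧ MomFin 2 (c t)}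

/-- the truncated kernel `K_n` -/
def Ktrunc (K : ℝ → ℝ → ℝ → ℝ) (n : ℕ) (x y z : ℝ) : ℝ :=
  if (1/(n:ℝ) < x ∧ x < n) ∧ (1/(n:ℝ) < y ∧ y < n) ∧ (1/(n:ℝ) < z ∧ z < n) ∧
     (0 < x + z ∧ x + z < n) ∧ (0 < y + z ∧ y + z < n) ∧
     1/(n:ℝ) < x - z ∧ 1/(n:ℝ) < y - z
  then K x y z else 0

/-- the right-hand side of the truncated system; coordinates `p = (z, y)`. -/
def truncRHS (K : ℝ → ℝ → ℝ → ℝ) (n : ℕ) (c : ℝ → ℝ) (x : ℝ) : ℝ :=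
  (∫ p in (Ioi (0:ℝ)) ×ˢ (Ioi (0:ℝ)),
      Ktrunc K n p.2 (x - p.1) p.1 * c p.2 * c (x - p.1))
  - (∫ p in (Ioi (0:ℝ)) ×ˢ (Ioi (0:ℝ)),
      Ktrunc K n x p.2 p.1 * c x * c p.2)
  - (∫ p in (Ioi (0:ℝ)) ×ˢ (Ioi (0:ℝ)),
      Ktrunc K n p.2 x p.1 * c p.2 * c x)
  + (∫ p in (Ioi (0:ℝ)) ×ˢ (Ioi (0:ℝ)),
      Ktrunc K n (x + p.1) p.2 p.1 * c (x + p.1) * c p.2)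

/-- classical solution of the truncated system on `L¹((1/n,n))`, extended by zero
outside `(1/n, n)`. -/
structure IsTruncatedSolution (K : ℝ → ℝ → ℝ → ℝ) (n : ℕ) (c : ℝ → ℝ → ℝ) :
    Prop where
  meas : ∀ t : ℝ, Measurable (c t)
  zero_outside : ∀ t : ℝ, ∀ x, x ∉ Ioo (1/(n:ℝ)) (n:ℝ) → c t x = 0
  integrable : ∀ t : ℝ, 0 ≤ t → IntegrableOn (c t) (Ioo (1/(n:ℝ)) (n:ℝ))
  ode : ∀ x ∈ Ioo (1/(n:ℝ)) (n:ℝ), ∀ t : ℝ, 0 ≤ t →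
    HasDerivWithinAt (fun s => c s x) (truncRHS K n (c t) x) (Ici 0) t

/-- de la Vallée-Poussin class `C_VP` -/
structure IsCVP (σ : ℝ → ℝ) : Prop where
  contDiff : ContDiffOn ℝ 2 σ (Ici 0)
  nonneg : ∀ x, 0 ≤ x → 0 ≤ σ x
  convex : ConvexOn ℝ (Ici 0) σ
  zero : σ 0 = 0
  deriv_zero : derivWithin σ (Ici 0) 0 = 0
  deriv_concave : ConcaveOn ℝ (Ici 0) (derivWithin σ (Ici 0))
  deriv_pos : ∀ x, 0 < x → 0 < derivWithin σ (Ici 0) x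
  deriv_top : Tendsto (derivWithin σ (Ici 0)) atTop atTop
  slope_top : Tendsto (fun x => σ x / x) atTop atTop


/-! ### Auxiliary lemmas -/

lemma aux_rpow_le {a r p : ℝ} (ha : 0 ≤ a) (hp : 0 ≤ p) (hpr : p ≤ r) {x : ℝ} (hx : 0 < x) :
    x ^ p ≤ x ^ (-a) + x ^ r := by
  rcases le_total x 1 with h|h
  · have h1 : x ^ p ≤ x ^ (-a) := Real.rpow_le_rpow_of_exponent_ge hx h (by linarith)
    have h2 : 0 ≤ x ^ r := Real.rpow_nonneg hx.le r
    linarith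
  · have h1 : x ^ p ≤ x ^ r := Real.rpow_le_rpow_of_exponent_le h hpr
    have h2 : 0 ≤ x ^ (-a) := Real.rpow_nonneg (by linarith) _
    linarith

lemma aux_w_le {a lam : ℝ} (ha : 0 ≤ a) (hlam : 0 ≤ lam) {x : ℝ} (hx : 0 < x) :
    hatm x ^ (-a) * checkm x ^ lam ≤ x ^ (-a) + x ^ lam := by
  rcases le_total x 1 with h|h
  · rw [hatm, checkm, min_eq_right h, max_eq_left h, Real.one_rpow, mul_one]
    have := Real.rpow_nonneg hx.le lam; linarith
  · rw [hatm, checkm, min_eq_left h, max_eq_right h, Real.one_rpow, one_mul]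
    have := Real.rpow_nonneg (show (0:ℝ) ≤ x by linarith) (-a); linarith

def clampR (R : ℝ) (x : ℝ) : ℝ := max 0 (min x R)

lemma clampR_nonneg (R x : ℝ) : 0 ≤ clampR R x := le_max_left _ _

lemma clampR_mono_lip (R : ℝ) {u v : ℝ} (h : v ≤ u) :
    clampR R v ≤ clampR R u ∧ clampR R u ≤ clampR R v + (u - v) := by
  constructor
  · exact max_le_max le_rfl (min_le_min h le_rfl)
  · simp only [clampR]
    have h1 : min u R ≤ min v R + (u - v) := by
      rcases le_total v R with hv|hv <;> rcases le_total u R with hu|hu <;>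
        simp [min_eq_left, min_eq_right, hv, hu] <;> linarith
    apply max_le
    · have : (0:ℝ) ≤ max 0 (min v R) := le_max_left _ _
      linarith
    · exact le_trans h1 (by have := le_max_right (0:ℝ) (min v R); linarith)

lemma clampR_dLap_abs (R : ℝ) {z : ℝ} (x : ℝ) (hz : 0 ≤ z) : |dLap (clampR R) z x| ≤ z := by
  have hA := clampR_mono_lip R (show x ≤ x + z by linarith)
  have hB := clampR_mono_lip R (show x - z ≤ x by linarith)
  rw [dLap, abs_le]
  constructor <;>
  · have hA1 := hA.1; have hA2 := hA.2; have hB1 := hB.1; have hB2 := hB.2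
    simp only [sub_sub_cancel] at hA2 hB2 ⊢
    linarith

lemma clampR_dLap_zero (R : ℝ) {z x : ℝ} (hz : 0 ≤ z) (hxz : 0 ≤ x - z) (hR : x + z ≤ R) :
    dLap (clampR R) z x = 0 := by
  have e : ∀ w : ℝ, 0 ≤ w → w ≤ R → clampR R w = w := by
    intro w h1 h2; rw [clampR, min_eq_left h2, max_eq_right h1]
  rw [dLap, e (x+z) (by linarith) hR, e x (by linarith) (by linarith),
    e (x-z) hxz (by linarith)]
  ring

lemma clampR_eq {R x : ℝ} (hx : 0 ≤ x) (hR : x ≤ R) : clampR R x = x := by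
  rw [clampR, min_eq_left hR, max_eq_right hx]

lemma clampR_le {R x : ℝ} (hx : 0 ≤ x) : clampR R x ≤ x :=
  max_le hx (min_le_left _ _)

lemma clampR_cont (R : ℝ) : Continuous (clampR R) :=
  continuous_const.max (continuous_id.min continuous_const)

lemma clampR_bddMeas (R : ℝ) : BddMeas (clampR R) := by
  refine ⟨(clampR_cont R).measurable, max 0 R, fun x => ?_⟩
  rw [abs_of_nonneg (clampR_nonneg R x)]
  exact max_le_max le_rfl (min_le_right _ _)

lemma aux_meas_rpow (p : ℝ) : Measurable fun x : ℝ => x ^ p := by measurability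

lemma aux_hatm_nonneg {x : ℝ} (hx : 0 ≤ x) : 0 ≤ hatm x := le_min zero_le_one hx

lemma aux_checkm_one_le (x : ℝ) : (1:ℝ) ≤ checkm x := le_max_left _ _

/-- pointwise bound on the kernel coming from the growth assumption -/
lemma aux_kernel_bound (K : ℝ → ℝ → ℝ → ℝ) (μ ν a : ℝ) (φ : ℝ → ℝ)
    (hK : IsKernel K) (hA : GlobalExistenceAssumption K μ ν a φ)
    {x y z : ℝ} (hx : 0 ≤ x) (hy : 0 ≤ y) (hz : 0 ≤ z) :
    K x y z ≤ (hatm x ^ (-a) * checkm x ^ (max μ ν)) *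
      ((hatm y ^ (-a) * checkm y ^ (max μ ν)) * |φ z|) := by
  have hcx : (1:ℝ) ≤ checkm x := aux_checkm_one_le x
  have hcy : (1:ℝ) ≤ checkm y := aux_checkm_one_le y
  have hcx0 : (0:ℝ) ≤ checkm x := by linarith
  have hcy0 : (0:ℝ) ≤ checkm y := by linarith
  have hhx' : 0 ≤ hatm x ^ (-a) := Real.rpow_nonneg (aux_hatm_nonneg hx) _
  have hhy' : 0 ≤ hatm y ^ (-a) := Real.rpow_nonneg (aux_hatm_nonneg hy) _
  have hwx : 0 ≤ hatm x ^ (-a) * checkm x ^ (max μ ν) :=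
    mul_nonneg hhx' (Real.rpow_nonneg hcx0 _)
  have hwy : 0 ≤ hatm y ^ (-a) * checkm y ^ (max μ ν) :=
    mul_nonneg hhy' (Real.rpow_nonneg hcy0 _)
  have hP : (checkm x ^ μ * checkm y ^ ν + checkm x ^ ν * checkm y ^ μ) / 2 ≤
      checkm x ^ (max μ ν) * checkm y ^ (max μ ν) := by
    have h1 : checkm x ^ μ ≤ checkm x ^ (max μ ν) :=
      Real.rpow_le_rpow_of_exponent_le hcx (le_max_left _ _)
    have h2 : checkm x ^ ν ≤ checkm x ^ (max μ ν) :=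
      Real.rpow_le_rpow_of_exponent_le hcx (le_max_right _ _)
    have h3 : checkm y ^ ν ≤ checkm y ^ (max μ ν) :=
      Real.rpow_le_rpow_of_exponent_le hcy (le_max_right _ _)
    have h4 : checkm y ^ μ ≤ checkm y ^ (max μ ν) :=
      Real.rpow_le_rpow_of_exponent_le hcy (le_max_left _ _)
    have n1 : 0 ≤ checkm x ^ μ := Real.rpow_nonneg hcx0 _
    have n2 : 0 ≤ checkm x ^ ν := Real.rpow_nonneg hcx0 _
    have n3 : 0 ≤ checkm y ^ ν := Real.rpow_nonneg hcy0 _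
    have n4 : 0 ≤ checkm y ^ μ := Real.rpow_nonneg hcy0 _
    have hA1 : checkm x ^ μ * checkm y ^ ν ≤ checkm x ^ (max μ ν) * checkm y ^ (max μ ν) :=
      mul_le_mul h1 h3 n3 (le_trans n1 h1)
    have hA2 : checkm x ^ ν * checkm y ^ μ ≤ checkm x ^ (max μ ν) * checkm y ^ (max μ ν) :=
      mul_le_mul h2 h4 n4 (le_trans n2 h2)
    linarith
  have hg := hA.growth x y z hx hy hz
  have hPn : 0 ≤ (checkm x ^ μ * checkm y ^ ν + checkm x ^ ν * checkm y ^ μ) / 2 := by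
    have n1 := mul_nonneg (Real.rpow_nonneg hcx0 μ) (Real.rpow_nonneg hcy0 ν)
    have n2 := mul_nonneg (Real.rpow_nonneg hcx0 ν) (Real.rpow_nonneg hcy0 μ)
    linarith
  rcases le_total (φ z) 0 with hφz | hφz
  · have hM : 0 ≤ hatm x ^ (-a) * hatm y ^ (-a) *
        ((checkm x ^ μ * checkm y ^ ν + checkm x ^ ν * checkm y ^ μ) / 2) :=
      mul_nonneg (mul_nonneg hhx' hhy') hPn
    have hK0 : K x y z = 0 :=
      le_antisymm (hg.trans (mul_nonpos_of_nonneg_of_nonpos hM hφz)) (hK.nonneg x y z)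
    rw [hK0]
    exact mul_nonneg hwx (mul_nonneg hwy (abs_nonneg _))
  · calc K x y z ≤ hatm x ^ (-a) * hatm y ^ (-a) *
          ((checkm x ^ μ * checkm y ^ ν + checkm x ^ ν * checkm y ^ μ) / 2) * φ z := hg
      _ ≤ hatm x ^ (-a) * hatm y ^ (-a) *
          (checkm x ^ (max μ ν) * checkm y ^ (max μ ν)) * φ z :=
        mul_le_mul_of_nonneg_right
          (mul_le_mul_of_nonneg_left hP (mul_nonneg hhx' hhy')) hφz
      _ = (hatm x ^ (-a) * checkm x ^ (max μ ν)) *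
          ((hatm y ^ (-a) * checkm y ^ (max μ ν)) * φ z) := by ring
      _ ≤ (hatm x ^ (-a) * checkm x ^ (max μ ν)) *
          ((hatm y ^ (-a) * checkm y ^ (max μ ν)) * |φ z|) := by
        exact mul_le_mul_of_nonneg_left
          (mul_le_mul_of_nonneg_left (le_abs_self _) hwy) hwx

/-- Conservation of mass and first moment for the limit solution. -/
theorem limit_solution_conservation
    (K : ℝ → ℝ → ℝ → ℝ) (μ ν a : ℝ) (φ : ℝ → ℝ)
    (hK : IsKernel K) (hA : GlobalExistenceAssumption K μ ν a φ)
    (c₀ : ℝ → ℝ) (hc₀ : MemYplus a (max μ ν) c₀)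
    (cn : ℕ → ℝ → ℝ → ℝ)
    (hsol : ∀ n : ℕ, 2 ≤ n → IsTruncatedSolution K n (cn n))
    (hnn : ∀ n : ℕ, 2 ≤ n → ∀ t x : ℝ, 0 ≤ t → 0 ≤ cn n t x)
    (hinit : ∀ n : ℕ, 2 ≤ n → ∀ x : ℝ,
      cn n 0 x = Set.indicator (Ioo (1/(n:ℝ)) (n:ℝ)) c₀ x)
    (c : ℝ → ℝ → ℝ)
    (hc : IsWeakSolution K a (max μ ν) ⊤ c₀ c)
    (ns : ℕ → ℕ) (hns : StrictMono ns) (hns2 : ∀ k, 2 ≤ ns k)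
    (hconv : ∀ t : ℝ, 0 ≤ t → ∀ m : ℝ, 0 < m → ∀ g : ℝ → ℝ, BddMeas g →
      Tendsto (fun k => ∫ x in Ioo (0:ℝ) m, g x * cn (ns k) t x)
        atTop (𝓝 (∫ x in Ioo (0:ℝ) m, g x * c t x)))
    (hmom : ∀ T : ℝ, 0 < T → ∃ C : ℝ, ∀ k : ℕ, ∀ t ∈ Icc (0:ℝ) T,
      MomMix a (max μ ν) (cn (ns k) t) ≤ C) :
    ∀ t : ℝ, 0 ≤ t → Mom 0 (c t) = Mom 0 c₀ ∧ Mom 1 (c t) = Mom 1 c₀ := by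
  intro t ht
  have hT : ENNReal.ofReal t < (⊤ : ℝ≥0∞) := ENNReal.ofReal_lt_top
  have hlam1 : (1:ℝ) ≤ max μ ν := hA.hlam.le
  have hlam0 : (0:ℝ) ≤ max μ ν := by linarith
  have ha : 0 ≤ a := hA.ha
  have hIoi : MeasurableSet (Ioi (0:ℝ)) := measurableSet_Ioi
  obtain ⟨C, hC⟩ := hc.bdd
  have hct : MemYplus a (max μ ν) (c t) := hc.mem t ht hT
  -- generic integrability of moments on `Ioi 0`
  have key : ∀ d : ℝ → ℝ, Measurable d →
      IntegrableOn (fun x => (x ^ (-a) + x ^ (max μ ν)) * |d x|) (Ioi (0:ℝ)) →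
      ∀ p : ℝ, 0 ≤ p → p ≤ max μ ν →
      IntegrableOn (fun x => x ^ p * d x) (Ioi (0:ℝ)) := by
    intro d hdm hdi p hp hpl
    refine Integrable.mono' hdi
      (((aux_meas_rpow p).mul hdm).aestronglyMeasurable) ?_
    refine ae_restrict_of_forall_mem hIoi fun x hx => ?_
    have hx0 : (0:ℝ) < x := hx
    rw [Real.norm_eq_abs, abs_mul, abs_of_nonneg (Real.rpow_nonneg hx0.le p)]
    exact mul_le_mul_of_nonneg_right (aux_rpow_le ha hp hpl hx0) (abs_nonneg _)
  have hint_ct0 : IntegrableOn (c t) (Ioi (0:ℝ)) := by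
    have := key (c t) hct.1.1 hct.1.2 0 le_rfl hlam0
    simpa [Real.rpow_zero] using this
  have hint_c00 : IntegrableOn c₀ (Ioi (0:ℝ)) := by
    have := key c₀ hc₀.1.1 hc₀.1.2 0 le_rfl hlam0
    simpa [Real.rpow_zero] using this
  have hint_ct1 : IntegrableOn (fun x => x * c t x) (Ioi (0:ℝ)) := by
    have := key (c t) hct.1.1 hct.1.2 1 zero_le_one hlam1
    simpa [Real.rpow_one] using this
  have hint_c01 : IntegrableOn (fun x => x * c₀ x) (Ioi (0:ℝ)) := by
    have := key c₀ hc₀.1.1 hc₀.1.2 1 zero_le_one hlam1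
    simpa [Real.rpow_one] using this
  constructor
  -- conservation of mass
  · have h0 := hc.weak t ht hT (fun _ => (1:ℝ))
      ⟨measurable_const, 1, fun x => by norm_num⟩
    have hd1 : ∀ z x : ℝ, dLap (fun _ => (1:ℝ)) z x = 0 := fun z x => by
      simp [dLap]; ring
    simp only [hd1, zero_mul, integral_zero, one_mul] at h0
    rw [integral_sub hint_ct0 hint_c00] at h0
    have e1 : Mom 0 (c t) = ∫ x in Ioi (0:ℝ), c t x := by
      simp [Mom, Real.rpow_zero]
    have e2 : Mom 0 c₀ = ∫ x in Ioi (0:ℝ), c₀ x := by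
      simp [Mom, Real.rpow_zero]
    rw [e1, e2]; linarith
  -- conservation of the first moment
  · have hDmeas : MeasurableSet Dcgedg := by
      have h1 : MeasurableSet {p : ℝ × ℝ × ℝ | 0 ≤ p.1} :=
        measurableSet_le measurable_const measurable_fst
      have h2 : MeasurableSet {p : ℝ × ℝ × ℝ | 0 ≤ p.2.1} :=
        measurableSet_le measurable_const measurable_snd.fst
      have h3 : MeasurableSet {p : ℝ × ℝ × ℝ | 0 ≤ p.2.2} :=
        measurableSet_le measurable_const measurable_snd.snd
      have h4 : MeasurableSet {p : ℝ × ℝ × ℝ | p.2.2 ≤ p.1} :=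
        measurableSet_le measurable_snd.snd measurable_fst
      have h5 : MeasurableSet {p : ℝ × ℝ × ℝ | p.2.2 ≤ p.2.1} :=
        measurableSet_le measurable_snd.snd measurable_snd.fst
      have : Dcgedg = {p : ℝ × ℝ × ℝ | 0 ≤ p.1} ∩ ({p : ℝ × ℝ × ℝ | 0 ≤ p.2.1} ∩
          ({p : ℝ × ℝ × ℝ | 0 ≤ p.2.2} ∩ ({p : ℝ × ℝ × ℝ | p.2.2 ≤ p.1} ∩
          {p : ℝ × ℝ × ℝ | p.2.2 ≤ p.2.1}))) := by
        ext p; simp [Dcgedg, Set.mem_inter_iff, and_assoc]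
      rw [this]
      exact h1.inter (h2.inter (h3.inter (h4.inter h5)))
    have hSmeas : MeasurableSet ((Ioc (0:ℝ) t) ×ˢ Dcgedg) :=
      measurableSet_Ioc.prod hDmeas
    have hKcInt : IntegrableOn (fun p : ℝ × ℝ × ℝ × ℝ =>
        K p.2.1 p.2.2.1 p.2.2.2 * c p.1 p.2.1 * c p.1 p.2.2.1)
        ((Ioc (0:ℝ) t) ×ˢ Dcgedg) := hc.integ t ht hT
    have hgmeas : AEStronglyMeasurable (fun p : ℝ × ℝ × ℝ × ℝ =>
        p.2.2.2 * (K p.2.1 p.2.2.1 p.2.2.2 * c p.1 p.2.1 * c p.1 p.2.2.1))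
        (volume.restrict ((Ioc (0:ℝ) t) ×ˢ Dcgedg)) :=
      (measurable_snd.snd.snd).aestronglyMeasurable.mul hKcInt.1
    -- uniform bound on the weighted norm lintegrals
    have hwC : ∀ s : ℝ, 0 ≤ s →
        (∫⁻ x in Ici (0:ℝ),
          ENNReal.ofReal ((hatm x ^ (-a) * checkm x ^ (max μ ν)) * |c s x|)) ≤
        ENNReal.ofReal C := by
      intro s hs
      have hmem := hc.mem s hs ENNReal.ofReal_lt_top
      rw [← Measure.restrict_congr_set (Ioi_ae_eq_Ici (a := (0:ℝ)))]
      calc (∫⁻ x in Ioi (0:ℝ),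
            ENNReal.ofReal ((hatm x ^ (-a) * checkm x ^ (max μ ν)) * |c s x|))
          ≤ ∫⁻ x in Ioi (0:ℝ),
            ENNReal.ofReal ((x ^ (-a) + x ^ (max μ ν)) * |c s x|) := by
            refine lintegral_mono_ae (ae_restrict_of_forall_mem hIoi fun x hx => ?_)
            exact ENNReal.ofReal_le_ofReal
              (mul_le_mul_of_nonneg_right (aux_w_le ha hlam0 hx) (abs_nonneg _))
        _ = ENNReal.ofReal (Ynorm a (max μ ν) (c s)) := by
            rw [Ynorm]
            refine (ofReal_integral_eq_lintegral_ofReal hmem.1.2 ?_).symm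
            refine ae_restrict_of_forall_mem hIoi fun x hx => ?_
            have hx0 : (0:ℝ) < x := hx
            exact mul_nonneg (by positivity) (abs_nonneg _)
        _ ≤ ENNReal.ofReal C :=
            ENNReal.ofReal_le_ofReal (hC s hs ENNReal.ofReal_lt_top)
    have hφC : (∫⁻ z in Ici (0:ℝ), ENNReal.ofReal (z * |φ z|)) ≤
        ENNReal.ofReal (Ynorm (2*a) (2*(max μ ν)) φ) := by
      rw [← Measure.restrict_congr_set (Ioi_ae_eq_Ici (a := (0:ℝ)))]
      calc (∫⁻ z in Ioi (0:ℝ), ENNReal.ofReal (z * |φ z|))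
          ≤ ∫⁻ z in Ioi (0:ℝ),
            ENNReal.ofReal ((z ^ (-(2*a)) + z ^ (2*(max μ ν))) * |φ z|) := by
            refine lintegral_mono_ae (ae_restrict_of_forall_mem hIoi fun z hz => ?_)
            have hz0 : (0:ℝ) < z := hz
            refine ENNReal.ofReal_le_ofReal
              (mul_le_mul_of_nonneg_right ?_ (abs_nonneg _))
            have := aux_rpow_le (a := 2*a) (r := 2*(max μ ν)) (p := 1)
              (by linarith) zero_le_one (by linarith) hz0
            rwa [Real.rpow_one] at this
        _ = ENNReal.ofReal (Ynorm (2*a) (2*(max μ ν)) φ) := by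
            rw [Ynorm]
            refine (ofReal_integral_eq_lintegral_ofReal hA.hφ.1.2 ?_).symm
            refine ae_restrict_of_forall_mem hIoi fun z hz => ?_
            have hz0 : (0:ℝ) < z := hz
            exact mul_nonneg (by positivity) (abs_nonneg _)
    -- inner bound for the lintegral over `Dcgedg`
    have hinner : ∀ s ∈ Ioc (0:ℝ) t,
        (∫⁻ q in Dcgedg, (‖q.2.2 * (K q.1 q.2.1 q.2.2 * c s q.1 * c s q.2.1)‖₊ : ℝ≥0∞)) ≤
        ENNReal.ofReal C * (ENNReal.ofReal C *
          ENNReal.ofReal (Ynorm (2*a) (2*(max μ ν)) φ)) := by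
      intro s hs
      have hs0 : 0 ≤ s := hs.1.le
      have hcs := hc.mem s hs0 ENNReal.ofReal_lt_top
      have hcsm : Measurable (c s) := hcs.1.1
      have hAmeas : Measurable fun x : ℝ =>
          ENNReal.ofReal ((hatm x ^ (-a) * checkm x ^ (max μ ν)) * |c s x|) := by
        apply ENNReal.measurable_ofReal.comp
        apply Measurable.mul _ hcsm.abs
        exact ((aux_meas_rpow (-a)).comp (measurable_const.min measurable_id)).mul
          ((aux_meas_rpow (max μ ν)).comp (measurable_const.max measurable_id))
      have hCmeas : Measurable fun z : ℝ => ENNReal.ofReal (z * |φ z|) := by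
        apply ENNReal.measurable_ofReal.comp
        exact measurable_id.mul hA.hφ.1.1.abs
      have hpt : ∀ q ∈ Dcgedg,
          (‖q.2.2 * (K q.1 q.2.1 q.2.2 * c s q.1 * c s q.2.1)‖₊ : ℝ≥0∞) ≤
          ENNReal.ofReal ((hatm q.1 ^ (-a) * checkm q.1 ^ (max μ ν)) * |c s q.1|) *
          (ENNReal.ofReal ((hatm q.2.1 ^ (-a) * checkm q.2.1 ^ (max μ ν)) * |c s q.2.1|) *
           ENNReal.ofReal (q.2.2 * |φ q.2.2|)) := by
        intro q hq
        obtain ⟨hx, hy, hz, hzx, hzy⟩ := hq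
        set x := q.1 with hxdef
        set y := q.2.1 with hydef
        set z := q.2.2 with hzdef
        have hwx0 : 0 ≤ hatm x ^ (-a) * checkm x ^ (max μ ν) * |c s x| :=
          mul_nonneg (mul_nonneg (Real.rpow_nonneg (aux_hatm_nonneg hx) _)
            (Real.rpow_nonneg (le_trans zero_le_one (aux_checkm_one_le x)) _)) (abs_nonneg _)
        have hwy0 : 0 ≤ hatm y ^ (-a) * checkm y ^ (max μ ν) * |c s y| :=
          mul_nonneg (mul_nonneg (Real.rpow_nonneg (aux_hatm_nonneg hy) _)
            (Real.rpow_nonneg (le_trans zero_le_one (aux_checkm_one_le y)) _)) (abs_nonneg _)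
        rw [← enorm_eq_nnnorm, Real.enorm_eq_ofReal_abs, ← ENNReal.ofReal_mul hwy0, ← ENNReal.ofReal_mul hwx0]
        apply ENNReal.ofReal_le_ofReal
        have habs : |z * (K x y z * c s x * c s y)| = z * K x y z * |c s x| * |c s y| := by
          rw [abs_mul, abs_mul, abs_mul, abs_of_nonneg hz, abs_of_nonneg (hK.nonneg x y z)]
          ring
        rw [habs]
        have hKb := aux_kernel_bound K μ ν a φ hK hA hx hy hz
        calc z * K x y z * |c s x| * |c s y|
            ≤ z * ((hatm x ^ (-a) * checkm x ^ (max μ ν)) *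
              ((hatm y ^ (-a) * checkm y ^ (max μ ν)) * |φ z|)) * |c s x| * |c s y| := by
              have h1 : z * K x y z ≤ z * ((hatm x ^ (-a) * checkm x ^ (max μ ν)) *
                  ((hatm y ^ (-a) * checkm y ^ (max μ ν)) * |φ z|)) :=
                mul_le_mul_of_nonneg_left hKb hz
              exact mul_le_mul_of_nonneg_right
                (mul_le_mul_of_nonneg_right h1 (abs_nonneg _)) (abs_nonneg _)
          _ = hatm x ^ (-a) * checkm x ^ (max μ ν) * |c s x| *
              (hatm y ^ (-a) * checkm y ^ (max μ ν) * |c s y| * (z * |φ z|)) := by ring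
      have hsub : Dcgedg ⊆ (Ici (0:ℝ)) ×ˢ ((Ici (0:ℝ)) ×ˢ (Ici (0:ℝ))) := by
        rintro ⟨x, y, z⟩ ⟨hx, hy, hz, -, -⟩
        exact ⟨hx, hy, hz⟩
      calc (∫⁻ q in Dcgedg, (‖q.2.2 * (K q.1 q.2.1 q.2.2 * c s q.1 * c s q.2.1)‖₊ : ℝ≥0∞))
          ≤ ∫⁻ q in Dcgedg,
            ENNReal.ofReal ((hatm q.1 ^ (-a) * checkm q.1 ^ (max μ ν)) * |c s q.1|) *
            (ENNReal.ofReal ((hatm q.2.1 ^ (-a) * checkm q.2.1 ^ (max μ ν)) * |c s q.2.1|) *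
             ENNReal.ofReal (q.2.2 * |φ q.2.2|)) :=
            lintegral_mono_ae (ae_restrict_of_forall_mem hDmeas hpt)
        _ ≤ ∫⁻ q in (Ici (0:ℝ)) ×ˢ ((Ici (0:ℝ)) ×ˢ (Ici (0:ℝ))),
            ENNReal.ofReal ((hatm q.1 ^ (-a) * checkm q.1 ^ (max μ ν)) * |c s q.1|) *
            (ENNReal.ofReal ((hatm q.2.1 ^ (-a) * checkm q.2.1 ^ (max μ ν)) * |c s q.2.1|) *
             ENNReal.ofReal (q.2.2 * |φ q.2.2|)) := lintegral_mono_set hsub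
        _ = (∫⁻ x in Ici (0:ℝ),
              ENNReal.ofReal ((hatm x ^ (-a) * checkm x ^ (max μ ν)) * |c s x|)) *
            ((∫⁻ y in Ici (0:ℝ),
              ENNReal.ofReal ((hatm y ^ (-a) * checkm y ^ (max μ ν)) * |c s y|)) *
             (∫⁻ z in Ici (0:ℝ), ENNReal.ofReal (z * |φ z|))) := by
            have hg2 : Measurable fun r : ℝ × ℝ =>
                ENNReal.ofReal ((hatm r.1 ^ (-a) * checkm r.1 ^ (max μ ν)) * |c s r.1|) *
                ENNReal.ofReal (r.2 * |φ r.2|) :=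
              (hAmeas.comp measurable_fst).mul (hCmeas.comp measurable_snd)
            rw [show volume.restrict ((Ici (0:ℝ)) ×ˢ ((Ici (0:ℝ)) ×ˢ (Ici (0:ℝ)))) =
                (volume.restrict (Ici (0:ℝ))).prod
                  (volume.restrict ((Ici (0:ℝ)) ×ˢ (Ici (0:ℝ)))) from by
              rw [Measure.prod_restrict, ← Measure.volume_eq_prod]]
            rw [lintegral_prod_mul (f := fun x : ℝ =>
                ENNReal.ofReal ((hatm x ^ (-a) * checkm x ^ (max μ ν)) * |c s x|))
              (g := fun r : ℝ × ℝ =>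
                ENNReal.ofReal ((hatm r.1 ^ (-a) * checkm r.1 ^ (max μ ν)) * |c s r.1|) *
                ENNReal.ofReal (r.2 * |φ r.2|))
              hAmeas.aemeasurable hg2.aemeasurable]
            congr 1
            rw [show volume.restrict ((Ici (0:ℝ)) ×ˢ (Ici (0:ℝ))) =
                (volume.restrict (Ici (0:ℝ))).prod (volume.restrict (Ici (0:ℝ))) from by
              rw [Measure.prod_restrict, ← Measure.volume_eq_prod]]
            exact lintegral_prod_mul hAmeas.aemeasurable hCmeas.aemeasurable
        _ ≤ ENNReal.ofReal C * (ENNReal.ofReal C *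
              ENNReal.ofReal (Ynorm (2*a) (2*(max μ ν)) φ)) := by
            exact mul_le_mul' (hwC s hs0) (mul_le_mul' (hwC s hs0) hφC)
    -- integrability of `z * K(x,y,z) c_s(x) c_s(y)` on the product domain
    have hgInt : IntegrableOn (fun p : ℝ × ℝ × ℝ × ℝ =>
        p.2.2.2 * (K p.2.1 p.2.2.1 p.2.2.2 * c p.1 p.2.1 * c p.1 p.2.2.1))
        ((Ioc (0:ℝ) t) ×ˢ Dcgedg) := by
      refine ⟨hgmeas, ?_⟩
      have hresS : volume.restrict ((Ioc (0:ℝ) t) ×ˢ Dcgedg) =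
          (volume.restrict (Ioc (0:ℝ) t)).prod (volume.restrict Dcgedg) := by
        rw [Measure.prod_restrict, ← Measure.volume_eq_prod]
      have haem : AEMeasurable (fun p : ℝ × ℝ × ℝ × ℝ =>
          (‖p.2.2.2 * (K p.2.1 p.2.2.1 p.2.2.2 * c p.1 p.2.1 * c p.1 p.2.2.1)‖₊ : ℝ≥0∞))
          ((volume.restrict (Ioc (0:ℝ) t)).prod (volume.restrict Dcgedg)) := by
        rw [← hresS]; exact hgmeas.enorm
      show (∫⁻ p, (‖p.2.2.2 * (K p.2.1 p.2.2.1 p.2.2.2 * c p.1 p.2.1 * c p.1 p.2.2.1)‖₊ : ℝ≥0∞)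
        ∂(volume.restrict ((Ioc (0:ℝ) t) ×ˢ Dcgedg))) < ⊤
      rw [hresS, lintegral_prod _ haem]
      refine lt_of_le_of_lt (lintegral_mono_ae (g := fun _ => ENNReal.ofReal C *
          (ENNReal.ofReal C * ENNReal.ofReal (Ynorm (2*a) (2*(max μ ν)) φ)))
        (ae_restrict_of_forall_mem measurableSet_Ioc fun s hs => ?_)) ?_
      · exact hinner s hs
      · rw [setLIntegral_const]
        refine ENNReal.mul_lt_top (ENNReal.mul_lt_top ENNReal.ofReal_lt_top
          (ENNReal.mul_lt_top ENNReal.ofReal_lt_top ENNReal.ofReal_lt_top)) ?_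
        rw [Real.volume_Ioc]
        exact ENNReal.ofReal_lt_top
    -- dominated convergence for the collision integral
    have hRHS : Tendsto (fun n : ℕ => ∫ p in (Ioc (0:ℝ) t) ×ˢ Dcgedg,
        dLap (clampR n) p.2.2.2 p.2.1 *
          (K p.2.1 p.2.2.1 p.2.2.2 * c p.1 p.2.1 * c p.1 p.2.2.1)) atTop (𝓝 0) := by
      have hFmeas : ∀ n : ℕ, AEStronglyMeasurable (fun p : ℝ × ℝ × ℝ × ℝ =>
          dLap (clampR n) p.2.2.2 p.2.1 *
            (K p.2.1 p.2.2.1 p.2.2.2 * c p.1 p.2.1 * c p.1 p.2.2.1))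
          (volume.restrict ((Ioc (0:ℝ) t) ×ˢ Dcgedg)) := by
        intro n
        have hx : Continuous fun p : ℝ × ℝ × ℝ × ℝ => p.2.1 := continuous_snd.fst
        have hz : Continuous fun p : ℝ × ℝ × ℝ × ℝ => p.2.2.2 := continuous_snd.snd.snd
        have hcont : Continuous fun p : ℝ × ℝ × ℝ × ℝ =>
            dLap (clampR n) p.2.2.2 p.2.1 := by
          simp only [dLap]
          exact (((clampR_cont n).comp (hx.add hz)).sub
            (continuous_const.mul ((clampR_cont n).comp hx))).add
            ((clampR_cont n).comp (hx.sub hz))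
        exact hcont.aestronglyMeasurable.mul hKcInt.1
      have hdct := tendsto_integral_of_dominated_convergence
        (μ := volume.restrict ((Ioc (0:ℝ) t) ×ˢ Dcgedg))
        (F := fun (n : ℕ) (p : ℝ × ℝ × ℝ × ℝ) => dLap (clampR n) p.2.2.2 p.2.1 *
          (K p.2.1 p.2.2.1 p.2.2.2 * c p.1 p.2.1 * c p.1 p.2.2.1))
        (f := fun _ => (0:ℝ))
        (fun p : ℝ × ℝ × ℝ × ℝ =>
          |p.2.2.2 * (K p.2.1 p.2.2.1 p.2.2.2 * c p.1 p.2.1 * c p.1 p.2.2.1)|)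
        hFmeas hgInt.abs ?_ ?_
      · simpa using hdct
      · intro n
        refine ae_restrict_of_forall_mem hSmeas fun p hp => ?_
        have hz : 0 ≤ p.2.2.2 := hp.2.2.2.1
        rw [Real.norm_eq_abs, abs_mul]
        calc |dLap (clampR n) p.2.2.2 p.2.1| *
              |K p.2.1 p.2.2.1 p.2.2.2 * c p.1 p.2.1 * c p.1 p.2.2.1|
            ≤ p.2.2.2 * |K p.2.1 p.2.2.1 p.2.2.2 * c p.1 p.2.1 * c p.1 p.2.2.1| :=
            mul_le_mul_of_nonneg_right (clampR_dLap_abs _ _ hz) (abs_nonneg _)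
          _ = |p.2.2.2 * (K p.2.1 p.2.2.1 p.2.2.2 * c p.1 p.2.1 * c p.1 p.2.2.1)| := by
            rw [abs_mul p.2.2.2, abs_of_nonneg hz]
      · refine ae_restrict_of_forall_mem hSmeas fun p hp => ?_
        have hz : 0 ≤ p.2.2.2 := hp.2.2.2.1
        have hxz : 0 ≤ p.2.1 - p.2.2.2 := sub_nonneg.mpr hp.2.2.2.2.1
        obtain ⟨N, hN⟩ := exists_nat_ge (p.2.1 + p.2.2.2)
        have hev : ∀ᶠ n : ℕ in atTop, dLap (clampR n) p.2.2.2 p.2.1 *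
            (K p.2.1 p.2.2.1 p.2.2.2 * c p.1 p.2.1 * c p.1 p.2.2.1) = 0 := by
          filter_upwards [eventually_ge_atTop N] with n hn
          rw [clampR_dLap_zero _ hz hxz (hN.trans (Nat.cast_le.mpr hn)), zero_mul]
        exact tendsto_const_nhds.congr' (hev.mono fun n h => h.symm)
    -- dominated convergence for the left-hand side
    have hLHS : Tendsto (fun n : ℕ => ∫ x in Ioi (0:ℝ), clampR n x * (c t x - c₀ x))
        atTop (𝓝 (∫ x in Ioi (0:ℝ), x * (c t x - c₀ x))) := by
      refine tendsto_integral_of_dominated_convergence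
        (fun x => (x ^ (-a) + x ^ (max μ ν)) * |c t x| +
          (x ^ (-a) + x ^ (max μ ν)) * |c₀ x|)
        (fun n => ((clampR_cont n).measurable.mul
          (hct.1.1.sub hc₀.1.1)).aestronglyMeasurable)
        (hct.1.2.add hc₀.1.2) (fun n => ?_) ?_
      · refine ae_restrict_of_forall_mem hIoi fun x hx => ?_
        have hx0 : (0:ℝ) < x := hx
        rw [Real.norm_eq_abs, abs_mul, abs_of_nonneg (clampR_nonneg _ _)]
        have h1 : clampR n x ≤ x := clampR_le hx0.le
        have h2 : |c t x - c₀ x| ≤ |c t x| + |c₀ x| := abs_sub _ _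
        have hxle : x ≤ x ^ (-a) + x ^ (max μ ν) := by
          have := aux_rpow_le ha zero_le_one hlam1 hx0
          rwa [Real.rpow_one] at this
        calc clampR n x * |c t x - c₀ x| ≤ x * (|c t x| + |c₀ x|) :=
            mul_le_mul h1 h2 (abs_nonneg _) hx0.le
          _ ≤ (x ^ (-a) + x ^ (max μ ν)) * (|c t x| + |c₀ x|) :=
            mul_le_mul_of_nonneg_right hxle (by positivity)
          _ = (x ^ (-a) + x ^ (max μ ν)) * |c t x| +
              (x ^ (-a) + x ^ (max μ ν)) * |c₀ x| := by ring
      · refine ae_restrict_of_forall_mem hIoi fun x hx => ?_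
        have hx0 : (0:ℝ) < x := hx
        obtain ⟨N, hN⟩ := exists_nat_ge x
        have hev : ∀ᶠ n : ℕ in atTop,
            clampR n x * (c t x - c₀ x) = x * (c t x - c₀ x) := by
          filter_upwards [eventually_ge_atTop N] with n hn
          rw [clampR_eq hx0.le (hN.trans (Nat.cast_le.mpr hn))]
        exact tendsto_const_nhds.congr' (hev.mono fun n h => h.symm)
    have heq : ∀ n : ℕ, (∫ x in Ioi (0:ℝ), clampR n x * (c t x - c₀ x)) =
        ∫ p in (Ioc (0:ℝ) t) ×ˢ Dcgedg, dLap (clampR n) p.2.2.2 p.2.1 *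
          (K p.2.1 p.2.2.1 p.2.2.2 * c p.1 p.2.1 * c p.1 p.2.2.1) := fun n =>
      hc.weak t ht hT (clampR n) (clampR_bddMeas n)
    have hone : (∫ x in Ioi (0:ℝ), x * (c t x - c₀ x)) = 0 := by
      refine tendsto_nhds_unique hLHS ?_
      have : (fun n : ℕ => ∫ x in Ioi (0:ℝ), clampR n x * (c t x - c₀ x)) =
          fun n : ℕ => ∫ p in (Ioc (0:ℝ) t) ×ˢ Dcgedg, dLap (clampR n) p.2.2.2 p.2.1 *
            (K p.2.1 p.2.2.1 p.2.2.2 * c p.1 p.2.1 * c p.1 p.2.2.1) := funext heq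
      rw [this]
      exact hRHS
    have hsplit : (∫ x in Ioi (0:ℝ), x * (c t x - c₀ x)) =
        (∫ x in Ioi (0:ℝ), x * c t x) - ∫ x in Ioi (0:ℝ), x * c₀ x := by
      rw [show (fun x => x * (c t x - c₀ x)) = fun x => x * c t x - x * c₀ x from
        funext fun x => mul_sub _ _ _]
      exact integral_sub hint_ct1 hint_c01
    have e1 : Mom 1 (c t) = ∫ x in Ioi (0:ℝ), x * c t x := by
      simp [Mom, Real.rpow_one]
    have e2 : Mom 1 c₀ = ∫ x in Ioi (0:ℝ), x * c₀ x := by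
      simp [Mom, Real.rpow_one]
    rw [e1, e2]
    rw [hsplit] at hone
    linarith
end
end

section
/- Conservation laws and monotonicity of the second moment: Let K be a kernel, let c₀ ∈ Y⁺_{0,2}, let 0 < T ≤ T_gel and let (c_t) be a weak solution of CGEDG with kernel K and initial datum c₀ on [0,T) in Y⁺_{0,2}, satisfying additionally ∫₀^t ∫_D z² K(x,y,z) c_s(x) c_s(y) d(x,y,z) ds < ∞ for all t ∈ [0,T). Then M₀(c_t) = M₀(c₀) and M₁(c_t) = M₁(c₀) for all t ∈ [0,T), and t ↦ M₂(c_t) is non-decreasing on [0,T); in fact M₂(c_t) − M₂(c₀) = 2∫₀^t ∫_D z² K(x,y,z) c_s(x) c_s(y) d(x,y,z) ds ≥ 0. -/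
open MeasureTheory Set Filter
open scoped ENNReal Topology

noncomputable section

/-! ### Auxiliary lemmas -/

def aux_posq (t : ℝ) : ℝ := (max t 0) ^ 2

lemma aux_posq_nonneg (t : ℝ) : 0 ≤ aux_posq t := sq_nonneg _

lemma aux_posq_mono {a b : ℝ} (h : a ≤ b) : aux_posq a ≤ aux_posq b :=
  pow_le_pow_left₀ (le_max_right _ _) (max_le_max h le_rfl) 2

lemma aux_posq_of_nonneg {t : ℝ} (h : 0 ≤ t) : aux_posq t = t ^ 2 := by
  rw [aux_posq, max_eq_left h]

lemma aux_posq_of_nonpos {t : ℝ} (h : t ≤ 0) : aux_posq t = 0 := by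
  rw [aux_posq, max_eq_right h]; ring

lemma aux_dlap_posq (x z : ℝ) (hz : 0 ≤ z) :
    0 ≤ aux_posq (x + z) - 2 * aux_posq x + aux_posq (x - z) ∧
    aux_posq (x + z) - 2 * aux_posq x + aux_posq (x - z) ≤ 2 * z ^ 2 := by
  rcases le_total (x - z) 0 with h1 | h1
  · rcases le_total x 0 with h2 | h2
    · rcases le_total (x + z) 0 with h3 | h3
      · rw [aux_posq_of_nonpos h1, aux_posq_of_nonpos h2, aux_posq_of_nonpos h3]
        constructor <;> nlinarith
      · rw [aux_posq_of_nonpos h1, aux_posq_of_nonpos h2, aux_posq_of_nonneg h3]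
        constructor <;> nlinarith
    · have h3 : 0 ≤ x + z := by linarith
      rw [aux_posq_of_nonpos h1, aux_posq_of_nonneg h2, aux_posq_of_nonneg h3]
      constructor <;> nlinarith
  · have h2 : 0 ≤ x := by linarith
    have h3 : 0 ≤ x + z := by linarith
    rw [aux_posq_of_nonneg h1, aux_posq_of_nonneg h2, aux_posq_of_nonneg h3]
    constructor <;> nlinarith

def aux_happrox (R x : ℝ) : ℝ :=
  aux_posq x - aux_posq (x - R) - aux_posq (x - 2 * R) + aux_posq (x - 3 * R)

lemma aux_happrox_cont (R : ℝ) : Continuous (aux_happrox R) := by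
  unfold aux_happrox aux_posq; fun_prop

lemma aux_happrox_abs {R : ℝ} (hR : 0 ≤ R) (x : ℝ) : |aux_happrox R x| ≤ aux_posq x := by
  have m1 : aux_posq (x - 3 * R) ≤ aux_posq (x - 2 * R) := aux_posq_mono (by linarith)
  have m2 : aux_posq (x - R) ≤ aux_posq x := aux_posq_mono (by linarith)
  have m3 : aux_posq (x - 2 * R) ≤ aux_posq x := aux_posq_mono (by linarith)
  have n1 := aux_posq_nonneg (x - 3 * R)
  have n2 := aux_posq_nonneg (x - R)
  have n3 := aux_posq_nonneg (x - 2 * R)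
  rw [abs_le]; unfold aux_happrox; constructor <;> nlinarith

lemma aux_happrox_bdd {R : ℝ} (hR : 0 ≤ R) (x : ℝ) : |aux_happrox R x| ≤ 9 * R ^ 2 := by
  rcases le_total x (3 * R) with h | h
  · have h1 : aux_posq x ≤ 9 * R ^ 2 := by
      rcases le_total x 0 with h2 | h2
      · rw [aux_posq_of_nonpos h2]; positivity
      · rw [aux_posq_of_nonneg h2]; nlinarith
    exact (aux_happrox_abs hR x).trans h1
  · have h0 : 0 ≤ x := by linarith
    rw [aux_happrox, aux_posq_of_nonneg h0, aux_posq_of_nonneg (by linarith : 0 ≤ x - R),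
      aux_posq_of_nonneg (by linarith : 0 ≤ x - 2 * R),
      aux_posq_of_nonneg (by linarith : 0 ≤ x - 3 * R)]
    rw [abs_le]; constructor <;> nlinarith

lemma aux_happrox_eq {R w : ℝ} (hR : 0 ≤ R) (hw : 0 ≤ w) (hwR : w ≤ R) :
    aux_happrox R w = w ^ 2 := by
  rw [aux_happrox, aux_posq_of_nonneg hw, aux_posq_of_nonpos (by linarith : w - R ≤ 0),
    aux_posq_of_nonpos (by linarith : w - 2 * R ≤ 0),
    aux_posq_of_nonpos (by linarith : w - 3 * R ≤ 0)]
  ring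

def aux_clampf (R x : ℝ) : ℝ := min (max x 0) R

lemma aux_clampf_cont (R : ℝ) : Continuous (aux_clampf R) := by
  unfold aux_clampf; fun_prop

lemma aux_clampf_bdd {R : ℝ} (hR : 0 ≤ R) (x : ℝ) : |aux_clampf R x| ≤ R := by
  rw [abs_le, aux_clampf]
  constructor
  · have : (0:ℝ) ≤ min (max x 0) R := le_min (le_max_right _ _) hR
    linarith
  · exact min_le_right _ _

lemma aux_clampf_le {R : ℝ} (hR : 0 ≤ R) {x : ℝ} (hx : 0 ≤ x) : |aux_clampf R x| ≤ x := by
  rw [abs_le, aux_clampf]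
  constructor
  · have : (0:ℝ) ≤ min (max x 0) R := le_min (le_max_right _ _) hR
    linarith
  · exact (min_le_left _ _).trans (by rw [max_eq_left hx])

lemma aux_clampf_eq {R w : ℝ} (hw : 0 ≤ w) (hwR : w ≤ R) : aux_clampf R w = w := by
  rw [aux_clampf, max_eq_left hw, min_eq_left hwR]

lemma aux_clampf_lip (R a b : ℝ) : |aux_clampf R a - aux_clampf R b| ≤ |a - b| := by
  unfold aux_clampf
  refine (abs_min_sub_min_le_max _ _ _ _).trans (max_le (abs_max_sub_max_le_abs _ _ _) ?_)
  simp [abs_nonneg]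

lemma aux_dlap_happrox (R x z : ℝ) (hz : 0 ≤ z) :
    |dLap (aux_happrox R) z x| ≤ 8 * (1 + z ^ 2) := by
  have e1 : x + z - R = x - R + z := by ring
  have e2 : x + z - 2 * R = x - 2 * R + z := by ring
  have e3 : x + z - 3 * R = x - 3 * R + z := by ring
  have e4 : x - z - R = x - R - z := by ring
  have e5 : x - z - 2 * R = x - 2 * R - z := by ring
  have e6 : x - z - 3 * R = x - 3 * R - z := by ring
  have b0 := aux_dlap_posq x z hz
  have b1 := aux_dlap_posq (x - R) z hz
  have b2 := aux_dlap_posq (x - 2 * R) z hz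
  have b3 := aux_dlap_posq (x - 3 * R) z hz
  simp only [dLap, aux_happrox, e1, e2, e3, e4, e5, e6]
  rw [abs_le]
  constructor <;> nlinarith [sq_nonneg z]

lemma aux_dlap_happrox_eq {R x z : ℝ} (hz : 0 ≤ z) (hzx : z ≤ x) (hR : x + z ≤ R) :
    dLap (aux_happrox R) z x = 2 * z ^ 2 := by
  have hR0 : 0 ≤ R := by linarith
  rw [dLap, aux_happrox_eq hR0 (by linarith) hR, aux_happrox_eq hR0 (by linarith) (by linarith),
    aux_happrox_eq hR0 (by linarith) (by linarith)]
  ring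

lemma aux_dlap_clampf (R x z : ℝ) (hz : 0 ≤ z) :
    |dLap (aux_clampf R) z x| ≤ 8 * (1 + z ^ 2) := by
  have e : dLap (aux_clampf R) z x =
      (aux_clampf R (x + z) - aux_clampf R x) + (aux_clampf R (x - z) - aux_clampf R x) := by
    rw [dLap]; ring
  have h1 := aux_clampf_lip R (x + z) x
  have h2 := aux_clampf_lip R (x - z) x
  have e1 : x + z - x = z := by ring
  have e2 : x - z - x = -z := by ring
  rw [e1, abs_of_nonneg hz] at h1
  rw [e2, abs_neg, abs_of_nonneg hz] at h2
  calc |dLap (aux_clampf R) z x| ≤ |aux_clampf R (x + z) - aux_clampf R x| +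
        |aux_clampf R (x - z) - aux_clampf R x| := by rw [e]; exact abs_add_le _ _
    _ ≤ 8 * (1 + z ^ 2) := by nlinarith [sq_nonneg (z - 1)]

lemma aux_dlap_clampf_eq {R x z : ℝ} (hz : 0 ≤ z) (hzx : z ≤ x) (hR : x + z ≤ R) :
    dLap (aux_clampf R) z x = 0 := by
  rw [dLap, aux_clampf_eq (by linarith) hR, aux_clampf_eq (by linarith) (by linarith),
    aux_clampf_eq (by linarith) (by linarith)]
  ring

lemma aux_dlap_const (x z : ℝ) : dLap (fun _ => (1:ℝ)) z x = 0 := by simp [dLap]; ring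

lemma aux_measD : MeasurableSet Dcgedg := by
  have : Dcgedg = {p : ℝ × ℝ × ℝ | 0 ≤ p.1} ∩ {p | 0 ≤ p.2.1} ∩ {p | 0 ≤ p.2.2} ∩
      {p | p.2.2 ≤ p.1} ∩ {p | p.2.2 ≤ p.2.1} := by
    ext p; simp only [Dcgedg, mem_setOf_eq, mem_inter_iff]; tauto
  rw [this]
  exact ((((measurableSet_le measurable_const measurable_fst).inter
    (measurableSet_le measurable_const measurable_snd.fst)).inter
    (measurableSet_le measurable_const measurable_snd.snd)).inter
    (measurableSet_le measurable_snd.snd measurable_fst)).inter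
    (measurableSet_le measurable_snd.snd measurable_snd.fst)

lemma aux_weight_eq {x : ℝ} (hx : 0 < x) : x ^ (-(0:ℝ)) + x ^ (2:ℝ) = 1 + x ^ 2 := by
  rw [neg_zero, Real.rpow_zero, Real.rpow_two]

lemma aux_keyInt {cc : ℝ → ℝ} (hcc : MemY 0 2 cc) {g : ℝ → ℝ} (hg : Measurable g)
    (hbd : ∀ x, 0 < x → |g x| ≤ 3 * (1 + x ^ 2)) :
    IntegrableOn (fun x => g x * cc x) (Ioi (0:ℝ)) := by
  apply Integrable.mono' (hcc.2.const_mul 3) ((hg.mul hcc.1).aestronglyMeasurable)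
  filter_upwards [ae_restrict_mem measurableSet_Ioi] with x hx
  rw [Real.norm_eq_abs, Pi.mul_apply, abs_mul]
  have hw := aux_weight_eq hx
  have h1 := hbd x hx
  have h2 := abs_nonneg (cc x)
  have h3 := abs_nonneg (g x)
  nlinarith [mul_le_mul_of_nonneg_right h1 h2]

lemma aux_nonneg (K : ℝ → ℝ → ℝ → ℝ) (hKnn : ∀ x y z, 0 ≤ K x y z)
    (c : ℝ → ℝ → ℝ) (T : ℝ≥0∞)
    (hcmem : ∀ s : ℝ, 0 ≤ s → ENNReal.ofReal s < T → MemYplus 0 2 (c s))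
    (t : ℝ) (htT : ENNReal.ofReal t < T)
    (hz2 : IntegrableOn (fun p : ℝ × ℝ × ℝ × ℝ =>
        p.2.2.2 ^ 2 * (K p.2.1 p.2.2.1 p.2.2.2 * c p.1 p.2.1 * c p.1 p.2.2.1))
      ((Ioc (0:ℝ) t) ×ˢ Dcgedg)) :
    0 ≤ᵐ[volume.restrict ((Ioc (0:ℝ) t) ×ˢ Dcgedg)]
      (fun p : ℝ × ℝ × ℝ × ℝ =>
        p.2.2.2 ^ 2 * (K p.2.1 p.2.2.1 p.2.2.2 * c p.1 p.2.1 * c p.1 p.2.2.1)) := by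
  set Fz := fun p : ℝ × ℝ × ℝ × ℝ =>
    p.2.2.2 ^ 2 * (K p.2.1 p.2.2.1 p.2.2.2 * c p.1 p.2.1 * c p.1 p.2.2.1) with hFzdef
  set S := (Ioc (0:ℝ) t) ×ˢ Dcgedg with hSdef
  have hS : MeasurableSet S := measurableSet_Ioc.prod aux_measD
  have hsm : AEStronglyMeasurable Fz (volume.restrict S) := hz2.1
  set G := hsm.mk Fz with hGdef
  have hGm : StronglyMeasurable G := hsm.stronglyMeasurable_mk
  have hae : Fz =ᵐ[volume.restrict S] G := hsm.ae_eq_mk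
  have hGset : MeasurableSet (S ∩ {p | G p < 0}) :=
    hS.inter (hGm.measurable measurableSet_Iio)
  have haeG : ∀ᵐ p ∂(volume : Measure (ℝ × ℝ × ℝ × ℝ)), p ∈ S → Fz p = G p :=
    (ae_restrict_iff' hS).mp hae
  rw [Measure.volume_eq_prod] at haeG
  have hkey : ((volume : Measure ℝ).prod (volume : Measure (ℝ × ℝ × ℝ)))
      (S ∩ {p | G p < 0}) = 0 := by
    rw [Measure.measure_prod_null hGset]
    have haeG2 := Measure.ae_ae_of_ae_prod haeG
    filter_upwards [haeG2] with s hs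
    simp only [Pi.zero_apply]
    by_cases hsmem : s ∈ Ioc (0:ℝ) t
    · have hs0 : 0 ≤ s := le_of_lt hsmem.1
      have hsT : ENNReal.ofReal s < T :=
        lt_of_le_of_lt (ENNReal.ofReal_le_ofReal hsmem.2) htT
      have hmem := hcmem s hs0 hsT
      have hN : volume {x : ℝ | 0 < x ∧ c s x < 0} = 0 := by
        have h1 := (ae_restrict_iff' measurableSet_Ioi).mp hmem.2
        rw [ae_iff] at h1
        refine measure_mono_null ?_ h1
        intro x hx
        exact fun h => absurd (h hx.1) (not_le.mpr hx.2)
      set Nx := {x : ℝ | 0 < x ∧ c s x < 0} ∪ {0} with hNxdef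
      have hNx : volume Nx = 0 :=
        measure_union_null hN (by simp)
      have hbad1 : (volume : Measure (ℝ × ℝ × ℝ)) (Nx ×ˢ (univ : Set (ℝ × ℝ))) = 0 := by
        rw [Measure.volume_eq_prod, Measure.prod_prod, hNx, zero_mul]
      have hbad2 : (volume : Measure (ℝ × ℝ × ℝ))
          ((univ : Set ℝ) ×ˢ (Nx ×ˢ (univ : Set ℝ))) = 0 := by
        rw [Measure.volume_eq_prod, Measure.prod_prod,
          Measure.volume_eq_prod, Measure.prod_prod, hNx, zero_mul, mul_zero]
      rw [ae_iff] at hs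
      refine measure_mono_null ?_
        (measure_union_null (measure_union_null hs hbad1) hbad2)
      intro q hq
      rw [mem_preimage] at hq
      obtain ⟨hqS, hqG⟩ := hq
      by_cases heq : Fz (s, q) = G (s, q)
      · have hFneg : Fz (s, q) < 0 := by rw [heq]; exact hqG
        have hzsq : (0:ℝ) ≤ q.2.2 ^ 2 := sq_nonneg _
        have hKq := hKnn q.1 q.2.1 q.2.2
        have hcc : c s q.1 * c s q.2.1 < 0 := by
          by_contra hcon
          push_neg at hcon
          have : 0 ≤ Fz (s, q) := by
            simp only [hFzdef]
            have : 0 ≤ K q.1 q.2.1 q.2.2 * c s q.1 * c s q.2.1 := by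
              rw [mul_assoc]; exact mul_nonneg hKq hcon
            positivity
          linarith
        have hD : q ∈ Dcgedg := hqS.2
        obtain ⟨hx0, hy0, _, _, _⟩ := hD
        have hcor : c s q.1 < 0 ∨ c s q.2.1 < 0 := by
          by_contra hcon
          push_neg at hcon
          nlinarith [hcon.1, hcon.2]
        rcases hcor with hcx | hcy
        · left; right
          refine ⟨?_, mem_univ _⟩
          rcases eq_or_lt_of_le hx0 with he | hlt
          · right; simp [← he]
          · left; exact ⟨hlt, hcx⟩
        · right
          refine ⟨mem_univ _, ?_, mem_univ _⟩
          rcases eq_or_lt_of_le hy0 with he | hlt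
          · right; simp [← he]
          · left; exact ⟨hlt, hcy⟩
      · left; left
        simp only [mem_setOf_eq]
        exact fun h => heq (h hqS)
    · refine measure_mono_null ?_ (measure_empty (μ := (volume : Measure (ℝ × ℝ × ℝ))))
      intro q hq
      rw [mem_preimage] at hq
      exact absurd hq.1.1 hsmem
  have hGnn : ∀ᵐ p ∂(volume.restrict S), 0 ≤ G p := by
    rw [ae_restrict_iff' hS, ae_iff]
    rw [Measure.volume_eq_prod]
    refine measure_mono_null ?_ hkey
    intro p hp
    simp only [mem_setOf_eq] at hp
    rw [Classical.not_imp] at hp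
    exact ⟨hp.1, not_le.mp hp.2⟩
  filter_upwards [hae, hGnn] with p h1 h2
  rw [h1]; exact h2

lemma aux_main (K : ℝ → ℝ → ℝ → ℝ) (c₀ : ℝ → ℝ) (hc₀ : MemYplus 0 2 c₀)
    (T : ℝ≥0∞) (c : ℝ → ℝ → ℝ) (hc : IsWeakSolution K 0 2 T c₀ c)
    (t : ℝ) (ht0 : 0 ≤ t) (htT : ENNReal.ofReal t < T)
    (hz2 : IntegrableOn (fun p : ℝ × ℝ × ℝ × ℝ =>
        p.2.2.2 ^ 2 * (K p.2.1 p.2.2.1 p.2.2.2 * c p.1 p.2.1 * c p.1 p.2.2.1))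
      ((Ioc (0:ℝ) t) ×ˢ Dcgedg))
    (f : ℕ → ℝ → ℝ) (hfb : ∀ n, BddMeas (f n)) (g : ℝ → ℝ)
    (hfabs : ∀ (n : ℕ) (x : ℝ), 0 < x → |f n x| ≤ 3 * (1 + x ^ 2))
    (hflim : ∀ x : ℝ, 0 < x → ∀ᶠ n in atTop, f n x = g x)
    (L : ℝ → ℝ)
    (hdabs : ∀ (n : ℕ) (x z : ℝ), 0 ≤ z → z ≤ x → |dLap (f n) z x| ≤ 8 * (1 + z ^ 2))
    (hdlim : ∀ x z : ℝ, 0 ≤ z → z ≤ x → ∀ᶠ n in atTop, dLap (f n) z x = L z) :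
    (∫ x in Ioi (0:ℝ), g x * (c t x - c₀ x)) =
      ∫ p in (Ioc (0:ℝ) t) ×ˢ Dcgedg,
        L p.2.2.2 * (K p.2.1 p.2.2.1 p.2.2.2 * c p.1 p.2.1 * c p.1 p.2.2.1) := by
  have hct := hc.mem t ht0 htT
  have hS : MeasurableSet ((Ioc (0:ℝ) t) ×ˢ Dcgedg) := measurableSet_Ioc.prod aux_measD
  have hInt : IntegrableOn (fun p : ℝ × ℝ × ℝ × ℝ =>
      K p.2.1 p.2.2.1 p.2.2.2 * c p.1 p.2.1 * c p.1 p.2.2.1)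
      ((Ioc (0:ℝ) t) ×ˢ Dcgedg) := hc.integ t ht0 htT
  have hdm : Measurable fun x => c t x - c₀ x := hct.1.1.sub hc₀.1.1
  have hbound1 : IntegrableOn
      (fun x => 3 * ((x ^ (-(0:ℝ)) + x ^ (2:ℝ)) * (|c t x| + |c₀ x|))) (Ioi (0:ℝ)) := by
    refine ((hct.1.2.add hc₀.1.2).const_mul 3).congr ?_
    exact Eventually.of_forall fun x => by simp only [Pi.add_apply]; ring
  have hLHS : Tendsto (fun n => ∫ x in Ioi (0:ℝ), f n x * (c t x - c₀ x)) atTop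
      (𝓝 (∫ x in Ioi (0:ℝ), g x * (c t x - c₀ x))) := by
    refine tendsto_integral_of_dominated_convergence _
      (fun n => ((hfb n).1.mul hdm).aestronglyMeasurable) hbound1 (fun n => ?_) ?_
    · filter_upwards [ae_restrict_mem measurableSet_Ioi] with x hx
      rw [Real.norm_eq_abs, abs_mul, aux_weight_eq hx]
      have h1 := hfabs n x hx
      have h2 : |c t x - c₀ x| ≤ |c t x| + |c₀ x| := abs_sub _ _
      nlinarith [abs_nonneg (f n x), abs_nonneg (c t x - c₀ x),
        mul_le_mul h1 h2 (abs_nonneg _) (by positivity)]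
    · filter_upwards [ae_restrict_mem measurableSet_Ioi] with x hx
      refine Tendsto.congr' ?_ tendsto_const_nhds
      filter_upwards [hflim x hx] with n hn
      rw [hn]
  have hbound2 : IntegrableOn (fun p : ℝ × ℝ × ℝ × ℝ =>
      8 * ‖K p.2.1 p.2.2.1 p.2.2.2 * c p.1 p.2.1 * c p.1 p.2.2.1‖ +
      8 * ‖p.2.2.2 ^ 2 * (K p.2.1 p.2.2.1 p.2.2.2 * c p.1 p.2.1 * c p.1 p.2.2.1)‖)
      ((Ioc (0:ℝ) t) ×ˢ Dcgedg) := (hInt.norm.const_mul 8).add (hz2.norm.const_mul 8)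
  have hRHS : Tendsto (fun n => ∫ p in (Ioc (0:ℝ) t) ×ˢ Dcgedg,
      dLap (f n) p.2.2.2 p.2.1 *
        (K p.2.1 p.2.2.1 p.2.2.2 * c p.1 p.2.1 * c p.1 p.2.2.1)) atTop
      (𝓝 (∫ p in (Ioc (0:ℝ) t) ×ˢ Dcgedg,
        L p.2.2.2 * (K p.2.1 p.2.2.1 p.2.2.2 * c p.1 p.2.1 * c p.1 p.2.2.1))) := by
    refine tendsto_integral_of_dominated_convergence _ (fun n => ?_) hbound2
      (fun n => ?_) ?_
    · have h1 : Measurable fun p : ℝ × ℝ × ℝ × ℝ => p.2.1 + p.2.2.2 :=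
        measurable_snd.fst.add measurable_snd.snd.snd
      have h2 : Measurable fun p : ℝ × ℝ × ℝ × ℝ => p.2.1 - p.2.2.2 :=
        measurable_snd.fst.sub measurable_snd.snd.snd
      have hm : Measurable fun p : ℝ × ℝ × ℝ × ℝ => dLap (f n) p.2.2.2 p.2.1 :=
        (((hfb n).1.comp h1).sub (((hfb n).1.comp measurable_snd.fst).const_mul 2)).add
          ((hfb n).1.comp h2)
      exact hm.aestronglyMeasurable.mul hInt.1
    · filter_upwards [ae_restrict_mem hS] with p hp
      obtain ⟨hp1, hx0, hy0, hz0, hzx, hzy⟩ := hp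
      rw [Real.norm_eq_abs, abs_mul]
      have h1 := hdabs n p.2.1 p.2.2.2 hz0 hzx
      have h2 : ‖p.2.2.2 ^ 2 * (K p.2.1 p.2.2.1 p.2.2.2 * c p.1 p.2.1 * c p.1 p.2.2.1)‖
          = p.2.2.2 ^ 2 * |K p.2.1 p.2.2.1 p.2.2.2 * c p.1 p.2.1 * c p.1 p.2.2.1| := by
        rw [Real.norm_eq_abs, abs_mul, abs_pow, abs_of_nonneg hz0]
      rw [h2, Real.norm_eq_abs]
      nlinarith [abs_nonneg (K p.2.1 p.2.2.1 p.2.2.2 * c p.1 p.2.1 * c p.1 p.2.2.1),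
        mul_le_mul_of_nonneg_right h1
          (abs_nonneg (K p.2.1 p.2.2.1 p.2.2.2 * c p.1 p.2.1 * c p.1 p.2.2.1))]
    · filter_upwards [ae_restrict_mem hS] with p hp
      obtain ⟨hp1, hx0, hy0, hz0, hzx, hzy⟩ := hp
      refine Tendsto.congr' ?_ tendsto_const_nhds
      filter_upwards [hdlim p.2.1 p.2.2.2 hz0 hzx] with n hn
      rw [hn]
  have hEq : ∀ n : ℕ, (∫ x in Ioi (0:ℝ), f n x * (c t x - c₀ x)) =
      ∫ p in (Ioc (0:ℝ) t) ×ˢ Dcgedg,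
        dLap (f n) p.2.2.2 p.2.1 *
          (K p.2.1 p.2.2.1 p.2.2.2 * c p.1 p.2.1 * c p.1 p.2.2.1) :=
    fun n => hc.weak t ht0 htT (f n) (hfb n)
  exact tendsto_nhds_unique hLHS (hRHS.congr fun n => (hEq n).symm)


/-- Conservation laws and monotonicity of the second moment. -/
theorem cgedg_conservation_and_monotone_second_moment
    (K : ℝ → ℝ → ℝ → ℝ) (hK : IsKernel K)
    (c₀ : ℝ → ℝ) (hc₀ : MemYplus 0 2 c₀)
    (T : ℝ≥0∞) (hT : 0 < T)
    (c : ℝ → ℝ → ℝ) (hc : IsWeakSolution K 0 2 T c₀ c)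
    (hgel : T ≤ gelTime T c)
    (hz2 : ∀ t : ℝ, 0 ≤ t → ENNReal.ofReal t < T →
      IntegrableOn (fun p : ℝ × ℝ × ℝ × ℝ =>
          p.2.2.2 ^ 2 * (K p.2.1 p.2.2.1 p.2.2.2 * c p.1 p.2.1 * c p.1 p.2.2.1))
        ((Ioc (0:ℝ) t) ×ˢ Dcgedg)) :
    (∀ t : ℝ, 0 ≤ t → ENNReal.ofReal t < T →
      Mom 0 (c t) = Mom 0 c₀ ∧ Mom 1 (c t) = Mom 1 c₀ ∧
      Mom 2 (c t) - Mom 2 c₀ =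
        2 * (∫ p in (Ioc (0:ℝ) t) ×ˢ Dcgedg,
          p.2.2.2 ^ 2 * (K p.2.1 p.2.2.1 p.2.2.2 * c p.1 p.2.1 * c p.1 p.2.2.1)) ∧
      0 ≤ (∫ p in (Ioc (0:ℝ) t) ×ˢ Dcgedg,
          p.2.2.2 ^ 2 * (K p.2.1 p.2.2.1 p.2.2.2 * c p.1 p.2.1 * c p.1 p.2.2.1))) ∧
    (∀ s t : ℝ, 0 ≤ s → s ≤ t → ENNReal.ofReal t < T →
      Mom 2 (c s) ≤ Mom 2 (c t)) := by
  have main : ∀ t : ℝ, 0 ≤ t → ENNReal.ofReal t < T →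
      Mom 0 (c t) = Mom 0 c₀ ∧ Mom 1 (c t) = Mom 1 c₀ ∧
      Mom 2 (c t) - Mom 2 c₀ =
        2 * (∫ p in (Ioc (0:ℝ) t) ×ˢ Dcgedg,
          p.2.2.2 ^ 2 * (K p.2.1 p.2.2.1 p.2.2.2 * c p.1 p.2.1 * c p.1 p.2.2.1)) ∧
      0 ≤ (∫ p in (Ioc (0:ℝ) t) ×ˢ Dcgedg,
          p.2.2.2 ^ 2 * (K p.2.1 p.2.2.1 p.2.2.2 * c p.1 p.2.1 * c p.1 p.2.2.1)) := by
    intro t ht0 htT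
    have hct := hc.mem t ht0 htT
    have hzt := hz2 t ht0 htT
    have momdiff : ∀ g : ℝ → ℝ, Measurable g → (∀ x, 0 < x → |g x| ≤ 3 * (1 + x ^ 2)) →
        (∫ x in Ioi (0:ℝ), g x * (c t x - c₀ x)) =
          (∫ x in Ioi (0:ℝ), g x * c t x) - ∫ x in Ioi (0:ℝ), g x * c₀ x := by
      intro g hg hbd
      rw [← integral_sub (aux_keyInt hct.1 hg hbd) (aux_keyInt hc₀.1 hg hbd)]
      exact integral_congr_ae (Eventually.of_forall fun x => by ring)
    have momEq : ∀ (l : ℝ) (g : ℝ → ℝ), (∀ x : ℝ, 0 < x → x ^ l = g x) →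
        ∀ cc : ℝ → ℝ, Mom l cc = ∫ x in Ioi (0:ℝ), g x * cc x := by
      intro l g hgl cc
      simp only [Mom]
      exact setIntegral_congr_fun measurableSet_Ioi fun x hx => by rw [hgl x hx]
    have h0 : Mom 0 (c t) = Mom 0 c₀ := by
      have hgl : ∀ x : ℝ, 0 < x → x ^ (0:ℝ) = (fun _ : ℝ => (1:ℝ)) x :=
        fun x _ => Real.rpow_zero x
      have hgb : ∀ x : ℝ, 0 < x → |(fun _ : ℝ => (1:ℝ)) x| ≤ 3 * (1 + x ^ 2) := by
        intro x hx
        show |(1:ℝ)| ≤ 3 * (1 + x ^ 2)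
        rw [abs_one]; nlinarith
      have e0 := aux_main K c₀ hc₀ T c hc t ht0 htT hzt (fun _ _ => (1:ℝ))
        (fun n => ⟨measurable_const, 1, fun x => le_of_eq abs_one⟩)
        (fun _ : ℝ => (1:ℝ)) (fun n x hx => hgb x hx)
        (fun x hx => Eventually.of_forall fun n => rfl)
        (fun _ => (0:ℝ))
        (fun n x z hz hzx => by rw [aux_dlap_const, abs_zero]; positivity)
        (fun x z hz hzx => Eventually.of_forall fun n => aux_dlap_const x z)
      have m1 := momEq 0 _ hgl (c t)
      have m2 := momEq 0 _ hgl c₀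
      have d := momdiff _ measurable_const hgb
      have er : (∫ p in (Ioc (0:ℝ) t) ×ˢ Dcgedg, (fun _ : ℝ => (0:ℝ)) p.2.2.2 *
          (K p.2.1 p.2.2.1 p.2.2.2 * c p.1 p.2.1 * c p.1 p.2.2.1)) = 0 := by simp
      beta_reduce at e0 d er
      linarith [e0, m1, m2, d, er]
    have h1 : Mom 1 (c t) = Mom 1 c₀ := by
      have hgl : ∀ x : ℝ, 0 < x → x ^ (1:ℝ) = (fun y : ℝ => y) x :=
        fun x _ => Real.rpow_one x
      have hgb : ∀ x : ℝ, 0 < x → |(fun y : ℝ => y) x| ≤ 3 * (1 + x ^ 2) := by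
        intro x hx
        show |x| ≤ 3 * (1 + x ^ 2)
        rw [abs_of_pos hx]; nlinarith
      have e1 := aux_main K c₀ hc₀ T c hc t ht0 htT hzt (fun n => aux_clampf (n:ℝ))
        (fun n => ⟨(aux_clampf_cont _).measurable, (n:ℝ),
          aux_clampf_bdd (Nat.cast_nonneg n)⟩)
        (fun y : ℝ => y)
        (fun n x hx => by
          have h := aux_clampf_le (R := (n:ℝ)) (Nat.cast_nonneg n) (le_of_lt hx)
          nlinarith)
        (fun x hx => by
          obtain ⟨N, hN⟩ := exists_nat_ge x
          filter_upwards [eventually_ge_atTop N] with n hn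
          exact aux_clampf_eq (le_of_lt hx) (hN.trans (Nat.cast_le.mpr hn)))
        (fun _ => (0:ℝ))
        (fun n x z hz hzx => aux_dlap_clampf _ x z hz)
        (fun x z hz hzx => by
          obtain ⟨N, hN⟩ := exists_nat_ge (x + z)
          filter_upwards [eventually_ge_atTop N] with n hn
          exact aux_dlap_clampf_eq hz hzx (hN.trans (Nat.cast_le.mpr hn)))
      have m1 := momEq 1 _ hgl (c t)
      have m2 := momEq 1 _ hgl c₀
      have hgm : Measurable fun y : ℝ => y := measurable_id
      have d := momdiff _ hgm hgb
      have er : (∫ p in (Ioc (0:ℝ) t) ×ˢ Dcgedg, (fun _ : ℝ => (0:ℝ)) p.2.2.2 *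
          (K p.2.1 p.2.2.1 p.2.2.2 * c p.1 p.2.1 * c p.1 p.2.2.1)) = 0 := by simp
      beta_reduce at e1 d er
      linarith [e1, m1, m2, d, er]
    have h2 : Mom 2 (c t) - Mom 2 c₀ =
        2 * (∫ p in (Ioc (0:ℝ) t) ×ˢ Dcgedg,
          p.2.2.2 ^ 2 * (K p.2.1 p.2.2.1 p.2.2.2 * c p.1 p.2.1 * c p.1 p.2.2.1)) := by
      have hgl : ∀ x : ℝ, 0 < x → x ^ (2:ℝ) = (fun y : ℝ => y ^ 2) x :=
        fun x _ => Real.rpow_two x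
      have hgm : Measurable fun y : ℝ => y ^ 2 := by fun_prop
      have hgb : ∀ x : ℝ, 0 < x → |(fun y : ℝ => y ^ 2) x| ≤ 3 * (1 + x ^ 2) := by
        intro x hx
        show |x ^ 2| ≤ 3 * (1 + x ^ 2)
        rw [abs_of_nonneg (sq_nonneg x)]; nlinarith
      have e2 := aux_main K c₀ hc₀ T c hc t ht0 htT hzt (fun n => aux_happrox (n:ℝ))
        (fun n => ⟨(aux_happrox_cont _).measurable, 9 * (n:ℝ) ^ 2,
          aux_happrox_bdd (Nat.cast_nonneg n)⟩)
        (fun y : ℝ => y ^ 2)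
        (fun n x hx => by
          have h := aux_happrox_abs (R := (n:ℝ)) (Nat.cast_nonneg n) x
          rw [aux_posq_of_nonneg (le_of_lt hx)] at h
          show |aux_happrox (n:ℝ) x| ≤ 3 * (1 + x ^ 2)
          nlinarith)
        (fun x hx => by
          obtain ⟨N, hN⟩ := exists_nat_ge x
          filter_upwards [eventually_ge_atTop N] with n hn
          exact aux_happrox_eq ((le_of_lt hx).trans (hN.trans (Nat.cast_le.mpr hn)))
            (le_of_lt hx) (hN.trans (Nat.cast_le.mpr hn)))
        (fun z : ℝ => 2 * z ^ 2)
        (fun n x z hz hzx => aux_dlap_happrox _ x z hz)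
        (fun x z hz hzx => by
          obtain ⟨N, hN⟩ := exists_nat_ge (x + z)
          filter_upwards [eventually_ge_atTop N] with n hn
          exact aux_dlap_happrox_eq hz hzx (hN.trans (Nat.cast_le.mpr hn)))
      have r2 : (∫ p in (Ioc (0:ℝ) t) ×ˢ Dcgedg,
          (fun z : ℝ => 2 * z ^ 2) p.2.2.2 *
            (K p.2.1 p.2.2.1 p.2.2.2 * c p.1 p.2.1 * c p.1 p.2.2.1)) =
          2 * ∫ p in (Ioc (0:ℝ) t) ×ˢ Dcgedg,
            p.2.2.2 ^ 2 * (K p.2.1 p.2.2.1 p.2.2.2 * c p.1 p.2.1 * c p.1 p.2.2.1) := by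
        rw [← integral_const_mul]
        exact integral_congr_ae (Eventually.of_forall fun p => by ring)
      have m1 := momEq 2 _ hgl (c t)
      have m2 := momEq 2 _ hgl c₀
      have d := momdiff _ hgm hgb
      beta_reduce at e2 d r2
      linarith [e2, m1, m2, d, r2]
    exact ⟨h0, h1, h2, integral_nonneg_of_ae (aux_nonneg K hK.nonneg c T hc.mem t htT hzt)⟩
  refine ⟨main, ?_⟩
  intro s t hs0 hst htT
  have ht0 : 0 ≤ t := hs0.trans hst
  have hsT : ENNReal.ofReal s < T := lt_of_le_of_lt (ENNReal.ofReal_le_ofReal hst) htT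
  obtain ⟨-, -, hms, -⟩ := main s hs0 hsT
  obtain ⟨-, -, hmt, -⟩ := main t ht0 htT
  have hIle : (∫ p in (Ioc (0:ℝ) s) ×ˢ Dcgedg,
      p.2.2.2 ^ 2 * (K p.2.1 p.2.2.1 p.2.2.2 * c p.1 p.2.1 * c p.1 p.2.2.1)) ≤
      ∫ p in (Ioc (0:ℝ) t) ×ˢ Dcgedg,
        p.2.2.2 ^ 2 * (K p.2.1 p.2.2.1 p.2.2.2 * c p.1 p.2.1 * c p.1 p.2.2.1) :=
    setIntegral_mono_set (hz2 t ht0 htT)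
      (aux_nonneg K hK.nonneg c T hc.mem t htT (hz2 t ht0 htT))
      (HasSubset.Subset.eventuallyLE (prod_mono (Ioc_subset_Ioc_right hst) subset_rfl))
  linarith
end
end
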